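/- Let R and S be strings as in the context, with insert points ip, matching-factor lengths ℓ, mismatch characters c, and flags x. For positions 1 ≤ i, j ≤ |S| with ip(i) = ip(j): if ℓ_i < ℓ_j and x_i = S, then the suffix S[i..] is lexicographically smaller than the suffix S[j..]. -/

import Mathlib

/-- The flag associated with a position of `S`: `S` = smaller, `L` = larger. -/
inductive MSFlag
  | S
  | L

private lemma not_lex_singleton {α : Type*} [LinearOrder α] (h : α) (L : List α)
    (hne : L ≠ []) (hmin : ∀ b ∈ L, ¬ b < h) : ¬ List.Lex (· < ·) L [h] := by
  match L, hne with
  | a :: t, _ =>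
    intro hl
    cases hl with
    | rel hr => exact hmin a List.mem_cons_self hr
    | cons hl2 => cases hl2

private lemma lex_append_aux {α : Type*} (r : α → α → Prop) (P l₁ l₂ : List α)
    (h : List.Lex r l₁ l₂) : List.Lex r (P ++ l₁) (P ++ l₂) := by
  induction P with
  | nil => exact h
  | cons a t ih => exact List.Lex.cons ih

/-- if `ip i = ip j`, `ℓ i < ℓ j` and `x i = S`, then `S.drop i` is lexicographically smaller than `S.drop j`. -/
theorem same_ip_len_lt_flag_S_implies_suffix_lt {α : Type*} [LinearOrder α]
    (R S : List α) (hash dollar : α)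
    (SA : ℕ → ℕ) (ℓ : ℕ → ℕ) (c : ℕ → α) (ip : ℕ → ℕ) (x : ℕ → MSFlag)
    -- sentinel/context hypotheses
    (hRne : R ≠ []) (hSne : S ≠ [])
    (hRlast : R[R.length - 1]? = some hash)
    (hRhash : ∀ m, R[m]? = some hash → m = R.length - 1)
    (hSlast : S[S.length - 1]? = some dollar)
    (hSdollar : ∀ m, S[m]? = some dollar → m = S.length - 1)
    (hhd : hash < dollar)
    (hhashmin : ∀ a, (a ∈ R ∨ a ∈ S) → a ≠ hash → hash < a)
    (hdollarmin : ∀ a, (a ∈ R ∨ a ∈ S) → a ≠ hash → a ≠ dollar → dollar < a)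
    (hSinR : ∀ a ∈ S, a ≠ dollar → a ∈ R)
    (hdnotR : dollar ∉ R)
    -- suffix array of R (0-based ranks and positions)
    (hSAran : ∀ k < R.length, SA k < R.length)
    (hSAsurj : ∀ m < R.length, ∃ k < R.length, SA k = m)
    (hSAmono : ∀ k₁ k₂, k₁ < k₂ → k₂ < R.length →
      List.Lex (· < ·) (R.drop (SA k₁)) (R.drop (SA k₂)))
    -- matching statistics: U i = (S.drop i).take (ℓ i) is the longest prefix of the
    -- suffix S.drop i occurring as a substring of R; c i = S[i + ℓ i] is the mismatch character
    (hUlen : ∀ i < S.length, ℓ i ≤ S.length - i)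
    (hUocc : ∀ i < S.length, (S.drop i).take (ℓ i) <:+: R)
    (hUmax : ∀ i < S.length, ∀ m, m ≤ S.length - i → (S.drop i).take m <:+: R → m ≤ ℓ i)
    (hc : ∀ i < S.length, S[i + ℓ i]? = some (c i))
    -- insert point
    (hip0 : ∀ i < S.length, ℓ i = 0 → ip i = 0)
    (hipmax : ∀ i < S.length, 0 < ℓ i →
      {k | k < R.length ∧ (S.drop i).take (ℓ i) <+: R.drop (SA k) ∧
        List.Lex (· < ·) (R.drop (SA k)) ((S.drop i).take (ℓ i) ++ [c i])}.Nonempty →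
      IsGreatest {k | k < R.length ∧ (S.drop i).take (ℓ i) <+: R.drop (SA k) ∧
        List.Lex (· < ·) (R.drop (SA k)) ((S.drop i).take (ℓ i) ++ [c i])} (ip i))
    (hipmin : ∀ i < S.length, 0 < ℓ i →
      ¬ {k | k < R.length ∧ (S.drop i).take (ℓ i) <+: R.drop (SA k) ∧
        List.Lex (· < ·) (R.drop (SA k)) ((S.drop i).take (ℓ i) ++ [c i])}.Nonempty →
      IsLeast {k | k < R.length ∧ (S.drop i).take (ℓ i) <+: R.drop (SA k)} (ip i))
    -- the flag x: x i = MSFlag.S iff c i < R[SA (ip i) + ℓ i], and x i = MSFlag.L otherwise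
    (hqran : ∀ i < S.length, SA (ip i) + ℓ i < R.length)
    (hx : ∀ i < S.length, (x i = MSFlag.S ↔ ∃ a, R[SA (ip i) + ℓ i]? = some a ∧ c i < a))
    (i j : ℕ) (hi : i < S.length) (hj : j < S.length)
    (hipeq : ip i = ip j) (hlen : ℓ i < ℓ j) (hxi : x i = MSFlag.S) :
    List.Lex (· < ·) (S.drop i) (S.drop j) := by
  have hRlen : 0 < R.length := List.length_pos_iff.mpr hRne
  -- basic index facts
  obtain ⟨hilen, hci⟩ := List.getElem?_eq_some_iff.mp (hc i hi)
  obtain ⟨hjlen, hcj⟩ := List.getElem?_eq_some_iff.mp (hc j hj)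
  have hqlt : SA (ip i) + ℓ i < R.length := hqran i hi
  -- the flag: c i < R[SA (ip i) + ℓ i]
  obtain ⟨a, ha, hlt⟩ := (hx i hi).mp hxi
  obtain ⟨_, haeq⟩ := List.getElem?_eq_some_iff.mp ha
  subst haeq
  -- main case split on whether ℓ i = 0
  rcases Nat.eq_zero_or_pos (ℓ i) with h0 | hℓi
  · -- ℓ i = 0 : then ip i = 0 and SA 0 = R.length - 1, so R[SA (ip i)] = hash,
    -- contradicting c i < hash.
    exfalso
    have hip : ip i = 0 := hip0 i hi h0
    have hSA0 : SA 0 = R.length - 1 := by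
      obtain ⟨k, hk, hSAk⟩ := hSAsurj (R.length - 1) (by omega)
      rcases Nat.eq_zero_or_pos k with rfl | hk0
      · exact hSAk
      · exfalso
        have hmono := hSAmono 0 k hk0 hk
        rw [hSAk] at hmono
        have hdropR : R.drop (R.length - 1) = [hash] := by
          obtain ⟨_, hh⟩ := List.getElem?_eq_some_iff.mp hRlast
          rw [List.drop_eq_getElem_cons (by omega), hh]
          simp [List.drop_eq_nil_of_le, Nat.sub_add_cancel hRlen]
        rw [hdropR] at hmono
        have hSA0lt : SA 0 < R.length := hSAran 0 hRlen
        refine not_lex_singleton hash (R.drop (SA 0)) ?_ ?_ hmono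
        · intro hnil
          have := congrArg List.length hnil
          simp at this; omega
        · intro b hb hblt
          have hmem : b ∈ R := List.drop_subset _ _ hb
          rcases eq_or_ne b hash with he | he
          · rw [he] at hblt; exact lt_irrefl _ hblt
          · exact absurd hblt (not_lt.mpr (hhashmin _ (Or.inl hmem) he).le)
    have hRhashval : R[SA (ip i) + ℓ i] = hash := by
      obtain ⟨_, hh⟩ := List.getElem?_eq_some_iff.mp hRlast
      have : SA (ip i) + ℓ i = R.length - 1 := by rw [h0, hip]; simpa using hSA0
      simp [this, hh]
    rw [hRhashval] at hlt
    have hcimem : c i ∈ S := by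
      have := List.getElem?_eq_some_iff.mp (hc i hi)
      obtain ⟨_, hh⟩ := this
      rw [← hh]; exact List.getElem_mem _
    rcases eq_or_ne (c i) hash with he | he
    · rw [he] at hlt; exact lt_irrefl _ hlt
    · exact absurd hlt (not_lt.mpr (hhashmin _ (Or.inr hcimem) he).le)
  · -- main case: ℓ i > 0
    have hℓj : 0 < ℓ j := hℓi.trans hlen
    set q := SA (ip i) with hq
    -- U i is a prefix of R.drop q
    have prefI : (S.drop i).take (ℓ i) <+: R.drop q := by
      by_cases hne : {k | k < R.length ∧ (S.drop i).take (ℓ i) <+: R.drop (SA k) ∧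
          List.Lex (· < ·) (R.drop (SA k)) ((S.drop i).take (ℓ i) ++ [c i])}.Nonempty
      · exact ((hipmax i hi hℓi hne).1).2.1
      · exact (hipmin i hi hℓi hne).1.2
    have prefJ : (S.drop j).take (ℓ j) <+: R.drop q := by
      have hqj : SA (ip j) = q := by rw [← hipeq]
      by_cases hne : {k | k < R.length ∧ (S.drop j).take (ℓ j) <+: R.drop (SA k) ∧
          List.Lex (· < ·) (R.drop (SA k)) ((S.drop j).take (ℓ j) ++ [c j])}.Nonempty
      · have := ((hipmax j hj hℓj hne).1).2.1; rwa [hqj] at this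
      · have := (hipmin j hj hℓj hne).1.2; rwa [hqj] at this
    -- lengths
    have hUilen : ((S.drop i).take (ℓ i)).length = ℓ i := by
      simp [List.length_take, List.length_drop]; omega
    have hUjlen : ((S.drop j).take (ℓ j)).length = ℓ j := by
      simp [List.length_take, List.length_drop]; omega
    -- (S.drop j).take (ℓ i) is also a prefix of R.drop q
    have prefJ' : (S.drop j).take (ℓ i) <+: R.drop q :=
      (List.take_isPrefix_take.mpr (Or.inl hlen.le)).trans prefJ
    -- the two length-(ℓ i) prefixes coincide
    have hUeq : (S.drop i).take (ℓ i) = (S.drop j).take (ℓ i) := by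
      have e1 : (S.drop i).take (ℓ i) = (R.drop q).take (ℓ i) := by
        have := List.prefix_iff_eq_take.mp prefI
        rwa [hUilen] at this
      have e2 : (S.drop j).take (ℓ i) = (R.drop q).take (ℓ i) := by
        have := List.prefix_iff_eq_take.mp prefJ'
        have hlen2 : ((S.drop j).take (ℓ i)).length = ℓ i := by
          simp [List.length_take, List.length_drop]; omega
        rwa [hlen2] at this
      rw [e1, e2]
    -- S[j + ℓ i] = R[q + ℓ i]
    have hjchar : S[j + ℓ i]'(by omega) = R[q + ℓ i]'hqlt := by
      have hidx : ℓ i < ((S.drop j).take (ℓ j)).length := by omega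
      have := prefJ.getElem hidx
      rw [List.getElem_take, List.getElem_drop] at this
      rw [List.getElem_drop] at this
      convert this using 2
    -- decompose S.drop i
    have hdi : S.drop i = (S.drop i).take (ℓ i) ++ c i :: S.drop (i + ℓ i + 1) := by
      conv_lhs => rw [← List.take_append_drop (ℓ i) (S.drop i)]
      congr 1
      rw [List.drop_drop]
      rw [List.drop_eq_getElem_cons hilen, hci]
    have hdj : S.drop j = (S.drop i).take (ℓ i) ++
        (R[q + ℓ i]'hqlt) :: S.drop (j + ℓ i + 1) := by
      conv_lhs => rw [← List.take_append_drop (ℓ i) (S.drop j)]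
      rw [← hUeq]
      congr 1
      rw [List.drop_drop]
      rw [List.drop_eq_getElem_cons (show j + ℓ i < S.length by omega), hjchar]
    rw [hdi, hdj]
    exact lex_append_aux _ _ _ _ (List.Lex.rel hlt)
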